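/- arXiv:1501.05737 — 2 statements merged into one kernel-verified Lean document; each statement's English description precedes it below -/
import Mathlib

section
/- Let g₁,...,g_N ∈ L²(Γ) (for Γ a measure space of positive measure) and let B be their Gram matrix, B(i,j) = ⟨gᵢ, gⱼ⟩. Let λ₁ < ... < λ_N and γ₁ < ... < γ_N be reals with γₖ ≠ λᵢ for all k,i, and let Λₖ be the diagonal matrix with entries 1/(γₖ - λᵢ). Assume that for almost every x, gᵢ(x) ≠ 0 for all i. Then B₁ + ... + B_N is invertible, where Bₖ = Λₖ B Λₖ. -/
open Matrix MeasureTheory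

open Polynomial in
/-- Kernel triviality for the Cauchy matrix `(k,i) ↦ 1/(ga k - l i)`. -/
lemma cauchy_kernel_aux {N : ℕ} (l ga : Fin N → ℝ)
    (hl : Function.Injective l) (hga : Function.Injective ga)
    (hne : ∀ k i, ga k ≠ l i) (u : Fin N → ℝ)
    (h : ∀ k, ∑ i, u i / (ga k - l i) = 0) (i : Fin N) : u i = 0 := by
  classical
  set P : ℝ[X] :=
    ∑ m, Polynomial.C (u m) * ∏ j ∈ Finset.univ.erase m, (X - Polynomial.C (l j)) with hP
  have hNpos : 0 < N := i.pos
  have hcard : ((Finset.univ : Finset (Fin N)).card : WithBot ℕ) = (N : WithBot ℕ) := by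
    simp
  have hdeg : P.degree < (Finset.univ : Finset (Fin N)).card := by
    rw [hP, hcard]
    refine lt_of_le_of_lt (Polynomial.degree_sum_le _ _) ?_
    rw [Finset.sup_lt_iff (by exact_mod_cast WithBot.bot_lt_coe N)]
    intro b _
    refine lt_of_le_of_lt (Polynomial.degree_mul_le _ _) ?_
    have h1 : (∏ j ∈ Finset.univ.erase b, (X - Polynomial.C (l j))).degree
        = ((N - 1 : ℕ) : WithBot ℕ) := by
      rw [Polynomial.degree_prod]
      simp [Polynomial.degree_X_sub_C, Finset.card_erase_of_mem]
    calc (Polynomial.C (u b)).degree + (∏ j ∈ Finset.univ.erase b, (X - Polynomial.C (l j))).degree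
        ≤ 0 + ((N - 1 : ℕ) : WithBot ℕ) := by
          exact add_le_add (Polynomial.degree_C_le) (le_of_eq h1)
      _ = ((N - 1 : ℕ) : WithBot ℕ) := by rw [zero_add]
      _ < (N : WithBot ℕ) := by exact_mod_cast Nat.sub_lt hNpos one_pos
  have heval : ∀ k, P.eval (ga k) = 0 := by
    intro k
    have hterm : ∀ m : Fin N, u m * ∏ j ∈ Finset.univ.erase m, (ga k - l j)
        = (u m / (ga k - l m)) * ∏ j, (ga k - l j) := by
      intro m
      have hne' : ga k - l m ≠ 0 := sub_ne_zero.mpr (hne k m)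
      rw [← Finset.mul_prod_erase Finset.univ _ (Finset.mem_univ m)]
      field_simp
    have : P.eval (ga k) = ∑ m, u m * ∏ j ∈ Finset.univ.erase m, (ga k - l j) := by
      simp [hP, Polynomial.eval_finset_sum, Polynomial.eval_prod]
    rw [this]
    calc ∑ m, u m * ∏ j ∈ Finset.univ.erase m, (ga k - l j)
        = ∑ m, (u m / (ga k - l m)) * ∏ j, (ga k - l j) :=
          Finset.sum_congr rfl fun m _ => hterm m
      _ = (∑ m, u m / (ga k - l m)) * ∏ j, (ga k - l j) := by rw [Finset.sum_mul]
      _ = 0 := by rw [h k, zero_mul]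
  have hP0 : P = 0 :=
    Polynomial.eq_zero_of_degree_lt_of_eval_index_eq_zero (Finset.univ)
      (hga.injOn) hdeg (fun k _ => heval k)
  have hPi : P.eval (l i) = u i * ∏ j ∈ Finset.univ.erase i, (l i - l j) := by
    have : P.eval (l i) = ∑ m, u m * ∏ j ∈ Finset.univ.erase m, (l i - l j) := by
      simp [hP, Polynomial.eval_finset_sum, Polynomial.eval_prod]
    rw [this]
    refine Finset.sum_eq_single i (fun m _ hmi => ?_) (by simp)
    have : (∏ j ∈ Finset.univ.erase m, (l i - l j)) = 0 :=
      Finset.prod_eq_zero (Finset.mem_erase.mpr ⟨Ne.symm hmi, Finset.mem_univ i⟩) (sub_self _)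
    rw [this, mul_zero]
  have hprod : (∏ j ∈ Finset.univ.erase i, (l i - l j)) ≠ 0 := by
    refine Finset.prod_ne_zero_iff.mpr fun j hj => ?_
    exact sub_ne_zero.mpr fun hlij => (Finset.mem_erase.mp hj).1 (hl hlij.symm)
  have : u i * ∏ j ∈ Finset.univ.erase i, (l i - l j) = 0 := by
    rw [← hPi, hP0, Polynomial.eval_zero]
  exact (mul_eq_zero.mp this).resolve_right hprod

/-- Product of two L² functions is integrable (via polarization). -/
lemma l2_mul_integrable_aux {Γ : Type*} [MeasurableSpace Γ] {μ : Measure Γ}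
    {f h : Γ → ℝ} (hf : MemLp f 2 μ) (hh : MemLp h 2 μ) :
    Integrable (fun x => f x * h x) μ := by
  have h1 := (hf.add hh).integrable_sq
  have h2 := hf.integrable_sq
  have h3 := hh.integrable_sq
  have heq : (fun x => f x * h x)
      = fun x => (((f x + h x) ^ 2 - f x ^ 2) - h x ^ 2) / 2 := by
    funext x; ring
  rw [heq]
  exact ((h1.sub h2).sub h3).div_const 2

theorem gram_scaled_sum_invertible {Γ : Type*} [MeasurableSpace Γ]
    (μ : Measure Γ) (hμ : 0 < μ Set.univ)
    (N : ℕ) (g : Fin N → Γ → ℝ) (hg : ∀ i, MemLp (g i) 2 μ)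
    (l ga : Fin N → ℝ) (hl : StrictMono l) (hga : StrictMono ga)
    (hne : ∀ k i, ga k ≠ l i)
    (hnz : ∀ᵐ x ∂μ, ∀ i, g i x ≠ 0)
    (B : Matrix (Fin N) (Fin N) ℝ)
    (hBdef : ∀ i j, B i j = ∫ x, g i x * g j x ∂μ)
    (L : Fin N → Matrix (Fin N) (Fin N) ℝ)
    (hLdef : ∀ k, L k = Matrix.diagonal fun i => 1 / (ga k - l i)) :
    IsUnit (∑ k, L k * B * L k).det := by
  classical
  rw [isUnit_iff_ne_zero]
  intro hdet
  obtain ⟨v, hv, hMv⟩ := (Matrix.exists_mulVec_eq_zero_iff).mpr hdet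
  -- the scaled vectors
  set w : Fin N → Fin N → ℝ := fun k i => v i / (ga k - l i) with hw
  -- the L² function attached to a coefficient vector
  have hF2 : ∀ u : Fin N → ℝ, MemLp (fun x => ∑ i, u i * g i x) 2 μ := by
    intro u
    have h0 := memLp_finset_sum' (μ := μ) (p := 2) Finset.univ
      (f := fun i x => u i * g i x) (fun i _ => (hg i).const_mul (u i))
    have he : (∑ i : Fin N, fun x => u i * g i x) = fun x => ∑ i : Fin N, u i * g i x := by
      funext x; simp
    rwa [he] at h0

  -- quadratic form of B is an integral of a square
  have hquad : ∀ u : Fin N → ℝ,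
      u ⬝ᵥ B.mulVec u = ∫ x, (∑ i, u i * g i x) ^ 2 ∂μ := by
    intro u
    have hint : ∀ i j : Fin N, Integrable (fun x => (u i * g i x) * (u j * g j x)) μ := by
      intro i j
      have := (l2_mul_integrable_aux (hg i) (hg j)).const_mul (u i * u j)
      refine this.congr (Filter.Eventually.of_forall fun x => ?_)
      ring
    have hint2 : ∀ i : Fin N,
        Integrable (fun x => ∑ j, (u i * g i x) * (u j * g j x)) μ :=
      fun i => integrable_finset_sum _ (fun j _ => hint i j)
    calc u ⬝ᵥ B.mulVec u
        = ∑ i, ∑ j, u i * (B i j * u j) := by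
          simp [dotProduct, Matrix.mulVec, Finset.mul_sum]
      _ = ∑ i, ∑ j, ∫ x, (u i * g i x) * (u j * g j x) ∂μ := by
          refine Finset.sum_congr rfl fun i _ => Finset.sum_congr rfl fun j _ => ?_
          rw [hBdef i j]
          have : ∀ x, (u i * g i x) * (u j * g j x) = (u i * u j) * (g i x * g j x) :=
            fun x => by ring
          simp_rw [this, integral_const_mul]
          ring
      _ = ∑ i, ∫ x, ∑ j, (u i * g i x) * (u j * g j x) ∂μ :=
          Finset.sum_congr rfl fun i _ =>
            (integral_finset_sum _ (fun j _ => hint i j)).symm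
      _ = ∫ x, ∑ i, ∑ j, (u i * g i x) * (u j * g j x) ∂μ :=
          (integral_finset_sum _ (fun i _ => hint2 i)).symm
      _ = ∫ x, (∑ i, u i * g i x) ^ 2 ∂μ := by
          congr 1; funext x
          rw [sq, Finset.sum_mul_sum]
  -- the quadratic form of each summand
  have hterm : ∀ k, v ⬝ᵥ (L k * B * L k).mulVec v
      = ∫ x, (∑ i, w k i * g i x) ^ 2 ∂μ := by
    intro k
    have hdv : (Matrix.diagonal fun i => 1 / (ga k - l i)) *ᵥ v = w k := by
      funext i; simp [Matrix.mulVec_diagonal, hw, div_eq_mul_inv, mul_comm]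
    have hvd : v ᵥ* (Matrix.diagonal fun i => 1 / (ga k - l i)) = w k := by
      funext i; simp [Matrix.vecMul_diagonal, hw, div_eq_mul_inv]
    have : v ⬝ᵥ (L k * B * L k).mulVec v = (w k) ⬝ᵥ B.mulVec (w k) := by
      rw [hLdef k, ← Matrix.mulVec_mulVec, ← Matrix.mulVec_mulVec, hdv,
        Matrix.dotProduct_mulVec, hvd]
    rw [this, hquad]
  -- the total quadratic form vanishes
  have hsum0 : ∑ k, ∫ x, (∑ i, w k i * g i x) ^ 2 ∂μ = 0 := by
    have h0 : v ⬝ᵥ (∑ k, L k * B * L k).mulVec v = 0 := by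
      rw [hMv, dotProduct_zero]
    have hswap : v ⬝ᵥ (∑ k, L k * B * L k).mulVec v
        = ∑ k, v ⬝ᵥ (L k * B * L k).mulVec v := by
      simp only [dotProduct, Matrix.mulVec, Matrix.sum_apply,
        Finset.sum_mul, Finset.mul_sum]
      calc ∑ i, ∑ j, ∑ k, v i * ((L k * B * L k) i j * v j)
          = ∑ i, ∑ k, ∑ j, v i * ((L k * B * L k) i j * v j) :=
            Finset.sum_congr rfl fun i _ => Finset.sum_comm
        _ = ∑ k, ∑ i, ∑ j, v i * ((L k * B * L k) i j * v j) := Finset.sum_comm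
    rw [← Finset.sum_congr rfl fun k (_ : k ∈ Finset.univ) => (hterm k), ← hswap, h0]
  -- hence each integral vanishes
  have hzero : ∀ k, ∫ x, (∑ i, w k i * g i x) ^ 2 ∂μ = 0 := by
    have := (Finset.sum_eq_zero_iff_of_nonneg (fun k _ =>
      integral_nonneg fun x => sq_nonneg _)).mp hsum0
    exact fun k => this k (Finset.mem_univ k)
  -- so each function vanishes a.e.
  have hae : ∀ k, ∀ᵐ x ∂μ, (∑ i, w k i * g i x) = 0 := by
    intro k
    have hint : Integrable (fun x => (∑ i, w k i * g i x) ^ 2) μ := (hF2 (w k)).integrable_sq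
    have := (integral_eq_zero_iff_of_nonneg (fun x => sq_nonneg _) hint).mp (hzero k)
    filter_upwards [this] with x hx
    exact pow_eq_zero_iff (n := 2) (by norm_num) |>.mp hx
  -- combine with the nonvanishing hypothesis, pick a point
  have hall : ∀ᵐ x ∂μ, (∀ k, (∑ i, w k i * g i x) = 0) ∧ ∀ i, g i x ≠ 0 := by
    refine Filter.Eventually.and ?_ hnz
    exact (MeasureTheory.ae_all_iff).mpr hae
  have hne0 : μ ≠ 0 := fun h0 => by simp [h0] at hμ
  have : (ae μ).NeBot := ae_neBot.mpr hne0
  obtain ⟨x, hx1, hx2⟩ := hall.exists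
  -- apply the Cauchy kernel lemma
  have hu : ∀ i, v i * g i x = 0 := by
    refine cauchy_kernel_aux l ga hl.injective hga.injective hne _ (fun k => ?_)
    rw [← hx1 k]
    refine Finset.sum_congr rfl fun i _ => ?_
    rw [hw]
    ring
  refine hv (funext fun i => ?_)
  exact (mul_eq_zero.mp (hu i)).resolve_right (hx2 i)
end

section
/- Let Z : [0,∞) → ℝ^N be differentiable, let γ₁ < γ₂ < ... < γ_N be positive reals, let B₂,...,B_N be positive semidefinite symmetric N×N matrices, let A be symmetric positive definite, and suppose Z satisfies Z'(t) = -γ₁ Z(t) + ∑_{k=2}^N (γ₁ - γₖ) Bₖ A Z(t) for all t ≥ 0. Then ‖A^{1/2}Z(t)‖² ≤ e^{-2γ₁ t}‖A^{1/2}Z(0)‖² for all t ≥ 0. -/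
open Matrix

private lemma quad_hasDerivAt {N : ℕ} (A : Matrix (Fin N) (Fin N) ℝ)
    (Z : ℝ → Fin N → ℝ) (Z' : Fin N → ℝ) (t : ℝ) (hZ : HasDerivAt Z Z' t) :
    HasDerivAt (fun s => Z s ⬝ᵥ A.mulVec (Z s))
      (Z' ⬝ᵥ A.mulVec (Z t) + Z t ⬝ᵥ A.mulVec Z') t := by
  have hZi : ∀ i, HasDerivAt (fun s => Z s i) (Z' i) t := hasDerivAt_pi.mp hZ
  have h1 : ∀ i, HasDerivAt (fun s => (A.mulVec (Z s)) i) ((A.mulVec Z') i) t := by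
    intro i
    simp only [Matrix.mulVec, dotProduct]
    exact HasDerivAt.fun_sum fun j _ => (hZi j).const_mul (A i j)
  have h2 := HasDerivAt.fun_sum (fun i (_ : i ∈ Finset.univ) => ((hZi i).mul (h1 i)))
  have h3 : HasDerivAt (fun s => Z s ⬝ᵥ A.mulVec (Z s))
      (∑ i, (Z' i * (A.mulVec (Z t)) i + Z t i * (A.mulVec Z') i)) t := h2
  convert h3 using 1
  simp [dotProduct, Finset.sum_add_distrib]

private lemma sum_dotProduct' {N : ℕ} (T : Finset (Fin N)) (g : Fin N → Fin N → ℝ)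
    (w : Fin N → ℝ) : (∑ k ∈ T, g k) ⬝ᵥ w = ∑ k ∈ T, g k ⬝ᵥ w := by
  simp only [dotProduct, Finset.sum_apply, Finset.sum_mul]
  exact Finset.sum_comm

theorem ode_weighted_decay (N : ℕ) (hN : 0 < N)
    (γ : Fin N → ℝ) (hγ : StrictMono γ) (hγpos : ∀ k, 0 < γ k)
    (B : Fin N → Matrix (Fin N) (Fin N) ℝ)
    (hB : ∀ k, k ≠ (⟨0, hN⟩ : Fin N) → (B k).PosSemidef)
    (A S : Matrix (Fin N) (Fin N) ℝ)
    (hA : A.PosDef) (hS : S.PosDef) (hSS : S * S = A)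
    (Z : ℝ → Fin N → ℝ) (hZ : Differentiable ℝ Z)
    (hODE : ∀ t ≥ (0:ℝ), deriv Z t =
      -(γ ⟨0, hN⟩) • Z t +
        ∑ k ∈ Finset.univ \ {(⟨0, hN⟩ : Fin N)},
          (γ ⟨0, hN⟩ - γ k) • (B k * A).mulVec (Z t)) :
    ∀ t ≥ (0:ℝ),
      S.mulVec (Z t) ⬝ᵥ S.mulVec (Z t) ≤
        Real.exp (-2 * γ ⟨0, hN⟩ * t) * (S.mulVec (Z 0) ⬝ᵥ S.mulVec (Z 0)) := by
  set c : ℝ := γ ⟨0, hN⟩ with hc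
  set f : ℝ → ℝ := fun s => Z s ⬝ᵥ A.mulVec (Z s) with hf
  have hSsym : Sᵀ = S := by
    have := hS.1
    rwa [Matrix.IsHermitian, conjTranspose_eq_transpose_of_trivial] at this
  have hform : ∀ v : Fin N → ℝ, S.mulVec v ⬝ᵥ S.mulVec v = v ⬝ᵥ A.mulVec v := by
    intro v
    calc S.mulVec v ⬝ᵥ S.mulVec v = (S.mulVec v) ᵥ* S ⬝ᵥ v := by
          rw [dotProduct_mulVec]
      _ = Sᵀ.mulVec (S.mulVec v) ⬝ᵥ v := by rw [mulVec_transpose]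
      _ = v ⬝ᵥ A.mulVec v := by
          rw [hSsym, mulVec_mulVec, hSS, dotProduct_comm]
  have hAsym : Aᵀ = A := by
    have := hA.1
    rwa [Matrix.IsHermitian, conjTranspose_eq_transpose_of_trivial] at this
  have hfderiv : ∀ s : ℝ, HasDerivAt f (2 * (deriv Z s ⬝ᵥ A.mulVec (Z s))) s := by
    intro s
    have h := quad_hasDerivAt A Z (deriv Z s) s (hZ s).hasDerivAt
    have hsym : Z s ⬝ᵥ A.mulVec (deriv Z s) = deriv Z s ⬝ᵥ A.mulVec (Z s) := by
      rw [dotProduct_mulVec, ← mulVec_transpose, hAsym, dotProduct_comm]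
    rw [hsym] at h
    convert h using 1; ring
  have hkey : ∀ s ≥ (0:ℝ), 2 * (deriv Z s ⬝ᵥ A.mulVec (Z s)) ≤ -2 * c * f s := by
    intro s hs
    rw [hODE s hs]
    have expand : (-c • Z s +
        ∑ k ∈ Finset.univ \ {(⟨0, hN⟩ : Fin N)},
          (c - γ k) • (B k * A).mulVec (Z s)) ⬝ᵥ A.mulVec (Z s)
        = -c * f s + ∑ k ∈ Finset.univ \ {(⟨0, hN⟩ : Fin N)},
            (c - γ k) * ((B k * A).mulVec (Z s) ⬝ᵥ A.mulVec (Z s)) := by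
      rw [add_dotProduct, sum_dotProduct']
      simp [smul_dotProduct, hf, smul_eq_mul]
    rw [expand]
    have hterm : ∀ k ∈ Finset.univ \ {(⟨0, hN⟩ : Fin N)},
        (c - γ k) * ((B k * A).mulVec (Z s) ⬝ᵥ A.mulVec (Z s)) ≤ 0 := by
      intro k hk
      simp only [Finset.mem_sdiff, Finset.mem_singleton] at hk
      have hklt : (⟨0, hN⟩ : Fin N) < k :=
        lt_of_le_of_ne (by simp [Fin.le_def]) (Ne.symm hk.2)
      have hγlt : c < γ k := hγ hklt
      have hpsd : 0 ≤ (B k * A).mulVec (Z s) ⬝ᵥ A.mulVec (Z s) := by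
        rw [← mulVec_mulVec, dotProduct_comm]
        have := (hB k hk.2).dotProduct_mulVec_nonneg (A.mulVec (Z s))
        simpa using this
      nlinarith
    have hsum : (∑ k ∈ Finset.univ \ {(⟨0, hN⟩ : Fin N)},
        (c - γ k) * ((B k * A).mulVec (Z s) ⬝ᵥ A.mulVec (Z s))) ≤ 0 :=
      Finset.sum_nonpos hterm
    nlinarith [hsum]
  -- Gronwall via monotonicity of g s = exp (2 c s) * f s
  set g : ℝ → ℝ := fun s => Real.exp (2 * c * s) * f s with hg
  have hgderiv : ∀ s : ℝ, HasDerivAt g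
      (Real.exp (2 * c * s) * (2 * c * f s + 2 * (deriv Z s ⬝ᵥ A.mulVec (Z s)))) s := by
    intro s
    have he := ((hasDerivAt_id s).const_mul (2 * c)).exp
    have := he.fun_mul (hfderiv s)
    simp only [id] at this
    refine this.congr_deriv ?_; ring
  have hmono : AntitoneOn g (Set.Ici (0:ℝ)) := by
    apply antitoneOn_of_deriv_nonpos (convex_Ici 0)
    · exact fun x _ => (hgderiv x).differentiableAt.continuousAt.continuousWithinAt
    · intro x hx
      exact (hgderiv x).differentiableAt.differentiableWithinAt
    · intro x hx
      rw [interior_Ici] at hx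
      rw [(hgderiv x).deriv]
      have hx0 : (0:ℝ) ≤ x := le_of_lt hx
      have := hkey x hx0
      have hexp : 0 < Real.exp (2 * c * x) := Real.exp_pos _
      nlinarith
  intro t ht
  have hgt : g t ≤ g 0 := hmono (Set.self_mem_Ici) ht ht
  simp only [hg, mul_zero, Real.exp_zero, one_mul] at hgt
  rw [hform, hform]
  have hexp : (0:ℝ) < Real.exp (2 * c * t) := Real.exp_pos _
  have : Real.exp (-2 * c * t) = (Real.exp (2 * c * t))⁻¹ := by
    rw [← Real.exp_neg]; ring_nf
  rw [this]
  rw [inv_mul_eq_div, le_div_iff₀ hexp]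
  calc f t * Real.exp (2 * c * t) = g t := by rw [hg]; ring
    _ ≤ f 0 := hgt
end
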